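/- For any d ≥ 1 and δ ∈ (0,1], there exists a δ-cover of [0,1)^d of cardinality at most 2^d (d^d/d!) (δ^{-1}+1)^d; in particular N(d,δ) ≤ (2e)^d (1+δ^{-1})^d. -/

import Mathlib

section Aux
open Finset

lemma pow_succ_gap (d : ℕ) {u : ℝ} (hu : 0 ≤ u) :
    (d + 1 : ℝ) * u ^ d ≤ (u + 1) ^ (d + 1) - u ^ (d + 1) := by
  induction d with
  | zero => simp
  | succ n ih =>
    have h2 := mul_le_mul_of_nonneg_right ih (by linarith : (0:ℝ) ≤ u + 1)
    have hp : (0:ℝ) ≤ u ^ n := pow_nonneg hu n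
    push_cast
    have e1 : (u + 1) ^ (n + 1 + 1) = ((u + 1) ^ (n + 1) - u ^ (n+1)) * (u+1) + u^(n+1) * (u+1) := by ring
    have e2 : u ^ n * u = u ^ (n+1) := by ring
    have e3 : u^(n+1) * (u+1) = u^(n+1+1) + u^(n+1) := by ring
    have e4 : ((n:ℝ) + 1) * u ^ n * (u + 1) = ((n:ℝ)+1) * u^(n+1) + ((n:ℝ)+1) * u^n := by ring
    nlinarith

lemma snoc_mem_Icc {d : ℕ} {f : Fin d → ℝ} {a : ℝ}
    (hf : f ∈ Set.Icc (0:Fin d → ℝ) 1) (ha : a ∈ Set.Icc (0:ℝ) 1) :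
    Fin.snoc f a ∈ Set.Icc (0:Fin (d+1) → ℝ) 1 := by
  obtain ⟨hf0, hf1⟩ := hf
  constructor
  · intro i
    induction i using Fin.lastCases with
    | last => simpa using ha.1
    | cast k => simpa using hf0 k
  · intro i
    induction i using Fin.lastCases with
    | last => simpa using ha.2
    | cast k => simpa using hf1 k

set_option maxHeartbeats 2000000 in
lemma step_case (d : ℕ) (hd : 1 ≤ d)
    (ih : ∀ δ : ℝ, δ ∈ Set.Ioc (0:ℝ) 1 →
      ∃ F : Finset ((Fin d → ℝ) × (Fin d → ℝ)),
        (∀ p ∈ F, p.1 ∈ Set.Icc (0:Fin d → ℝ) 1 ∧ p.2 ∈ Set.Icc (0:Fin d → ℝ) 1) ∧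
        (∀ y : Fin d → ℝ, y ∈ Set.Icc (0:Fin d → ℝ) 1 →
          ∃ p ∈ F, p.1 ≤ y ∧ y ≤ p.2 ∧ (∏ i, p.2 i) - ∏ i, p.1 i ≤ δ) ∧
        (F.card : ℝ) ≤ 2^(d-1) * ((d:ℝ)^d / (d.factorial:ℝ)) * (δ⁻¹+1)^d)
    (δ : ℝ) (hδ : δ ∈ Set.Ioc (0:ℝ) 1) :
    ∃ F : Finset ((Fin (d+1) → ℝ) × (Fin (d+1) → ℝ)),
      (∀ p ∈ F, p.1 ∈ Set.Icc (0:Fin (d+1) → ℝ) 1 ∧ p.2 ∈ Set.Icc (0:Fin (d+1) → ℝ) 1) ∧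
      (∀ y : Fin (d+1) → ℝ, y ∈ Set.Icc (0:Fin (d+1) → ℝ) 1 →
        ∃ p ∈ F, p.1 ≤ y ∧ y ≤ p.2 ∧ (∏ i, p.2 i) - ∏ i, p.1 i ≤ δ) ∧
      (F.card : ℝ) ≤ 2^((d+1)-1) * (((d:ℝ)+1)^(d+1) / ((d+1).factorial:ℝ)) * (δ⁻¹+1)^(d+1) := by
  obtain ⟨hδ0, hδ1⟩ := hδ
  choose G hG using ih
  have hd0 : (1:ℝ) ≤ (d:ℝ) := by exact_mod_cast hd
  set D : ℝ := (d:ℝ) + 1 with hD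
  have hD0 : (0:ℝ) < D := by linarith
  set t : ℕ → ℝ := fun j => 1 - (j:ℝ)*δ/D with ht
  set ν : ℕ := ⌊D*(1-δ)/δ⌋₊ + 1 with hν
  have hnn' : 0 ≤ D*(1-δ)/δ := div_nonneg (mul_nonneg (le_of_lt hD0) (by linarith)) (le_of_lt hδ0)
  have htmono : ∀ a b : ℕ, a ≤ b → t b ≤ t a := by
    intro a b hab
    simp only [ht]
    have h1 : (a:ℝ) ≤ (b:ℝ) := Nat.cast_le.mpr hab
    have h2 : (a:ℝ)*δ/D ≤ (b:ℝ)*δ/D := by gcongr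
    linarith
  have htj : ∀ j : ℕ, j < ν → δ ≤ t j := by
    intro j hj
    have h1 : (j:ℝ) ≤ D*(1-δ)/δ := by
      refine le_trans (Nat.cast_le.mpr (Nat.lt_succ_iff.mp hj)) (Nat.floor_le hnn')
    have h2 : (j:ℝ)*δ ≤ D*(1-δ) := (le_div_iff₀ hδ0).mp h1
    have h3 : (j:ℝ)*δ/D ≤ 1-δ := (div_le_iff₀ hD0).mpr (by linarith)
    simp only [ht]
    linarith
  have ht1 : ∀ j : ℕ, t j ≤ 1 := by
    intro j
    have : 0 ≤ (j:ℝ)*δ/D := by positivity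
    simp only [ht]
    linarith
  have htν : t ν ≤ δ := by
    have h1 : D*(1-δ)/δ < (ν:ℝ) := by
      rw [hν]; push_cast
      exact Nat.lt_floor_add_one _
    have h2 : D*(1-δ) < (ν:ℝ)*δ := by rw [div_lt_iff₀ hδ0] at h1; linarith
    have h3 : 1 - δ < (ν:ℝ)*δ/D := (lt_div_iff₀ hD0).mpr (by linarith)
    simp only [ht]
    linarith
  have htν0 : 0 ≤ t ν := by
    have h1 : (ν:ℝ) ≤ D*(1-δ)/δ + 1 := by
      rw [hν]; push_cast
      linarith [Nat.floor_le hnn']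
    have h2 : (ν:ℝ)*δ ≤ (D*(1-δ)/δ + 1)*δ := mul_le_mul_of_nonneg_right h1 (le_of_lt hδ0)
    have e : (D*(1-δ)/δ + 1)*δ = D*(1-δ) + δ := by field_simp
    rw [e] at h2
    simp only [ht]
    rw [sub_nonneg]
    rw [div_le_one hD0]
    nlinarith
  set δ' : ℕ → ℝ := fun j => (d:ℝ)*δ/(D * t j) with hδ'
  have hδ'mem : ∀ j : ℕ, j < ν → δ' j ∈ Set.Ioc (0:ℝ) 1 := by
    intro j hj
    have htj' := htj j hj
    have htpos : 0 < t j := lt_of_lt_of_le hδ0 htj'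
    constructor
    · apply div_pos (by nlinarith) (by nlinarith)
    · rw [div_le_one (by nlinarith)]
      nlinarith
  set Gj : ℕ → Finset ((Fin d → ℝ) × (Fin d → ℝ)) :=
    fun j => if h : δ' j ∈ Set.Ioc (0:ℝ) 1 then G (δ' j) h else ∅ with hGj
  set lift : ℕ → ((Fin d → ℝ) × (Fin d → ℝ)) → ((Fin (d+1) → ℝ) × (Fin (d+1) → ℝ)) :=
    fun j p => (Fin.snoc p.1 (t (j+1)), Fin.snoc p.2 (t j)) with hlift
  set tail : (Fin (d+1) → ℝ) × (Fin (d+1) → ℝ) :=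
    ((0 : Fin (d+1) → ℝ), Fin.snoc (fun _ : Fin d => (1:ℝ)) (t ν)) with htail
  have htail1 : tail.1 = 0 := by rw [htail]
  have htail2 : tail.2 = Fin.snoc (fun _ : Fin d => (1:ℝ)) (t ν) := by rw [htail]
  have hGjm : ∀ j : ℕ, ∀ hm : δ' j ∈ Set.Ioc (0:ℝ) 1, Gj j = G (δ' j) hm := by
    intro j hm
    simp only [hGj]
    rw [dif_pos hm]
  refine ⟨insert tail ((range ν).biUnion (fun j => (Gj j).image (lift j))), ?_, ?_, ?_⟩
  · -- endpoints in cube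
    intro p hp
    rcases mem_insert.mp hp with rfl | hp
    · constructor
      · rw [htail1]
        exact Set.mem_Icc.mpr ⟨le_refl _, zero_le_one⟩
      · rw [htail2]
        refine snoc_mem_Icc ?_ ⟨htν0, le_trans htν hδ1⟩
        constructor
        · intro i; exact zero_le_one
        · intro i; exact le_refl _
    · simp only [mem_biUnion, mem_range, mem_image] at hp
      obtain ⟨j, hjν, q, hq, rfl⟩ := hp
      have hm := hδ'mem j hjν
      rw [hGjm j hm] at hq
      obtain ⟨hq1, hq2⟩ := (hG (δ' j) hm).1 q hq
      have hjν1 : j + 1 ≤ ν := hjν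
      have htj1a : 0 ≤ t (j+1) := le_trans htν0 (htmono (j+1) ν hjν1)
      have htja : 0 ≤ t j := le_trans htj1a (htmono j (j+1) (Nat.le_succ j))
      constructor
      · exact snoc_mem_Icc hq1 ⟨htj1a, ht1 (j+1)⟩
      · exact snoc_mem_Icc hq2 ⟨htja, ht1 j⟩
  · -- coverage
    intro y hy
    obtain ⟨hy0, hy1⟩ := hy
    have ha0 : 0 ≤ y (Fin.last d) := hy0 _
    have ha1 : y (Fin.last d) ≤ 1 := hy1 _
    have hy' : Fin.init y ∈ Set.Icc (0:Fin d → ℝ) 1 := by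
      constructor
      · intro k
        exact hy0 k.castSucc
      · intro k
        exact hy1 k.castSucc
    set a : ℝ := y (Fin.last d) with hadef
    have hnn : 0 ≤ D*(1-a)/δ :=
      div_nonneg (mul_nonneg (le_of_lt hD0) (by linarith)) (le_of_lt hδ0)
    set j : ℕ := ⌊D*(1-a)/δ⌋₊ with hjdef
    have hjle : (j:ℝ) ≤ D*(1-a)/δ := Nat.floor_le hnn
    have hjlt : D*(1-a)/δ < (j:ℝ)+1 := Nat.lt_floor_add_one _
    have hatj : a ≤ t j := by
      have h2 : (j:ℝ)*δ ≤ D*(1-a) := (le_div_iff₀ hδ0).mp hjle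
      have h3 : (j:ℝ)*δ/D ≤ 1-a := (div_le_iff₀ hD0).mpr (by linarith)
      simp only [ht]
      linarith
    by_cases hjν : j < ν
    · have hm := hδ'mem j hjν
      obtain ⟨p, hpG, hp1, hp2, hpΔ⟩ := (hG (δ' j) hm).2.1 (Fin.init y) hy'
      have hatj1 : t (j+1) ≤ a := by
        have h2 : D*(1-a) < ((j:ℝ)+1)*δ := by rw [div_lt_iff₀ hδ0] at hjlt; linarith
        have h3 : 1-a < ((j:ℝ)+1)*δ/D := (lt_div_iff₀ hD0).mpr (by linarith)
        simp only [ht]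
        push_cast
        linarith
      refine ⟨lift j p, ?_, ?_, ?_, ?_⟩
      · refine mem_insert_of_mem (mem_biUnion.mpr ⟨j, mem_range.mpr hjν, mem_image_of_mem _ ?_⟩)
        rw [hGjm j hm]
        exact hpG
      · intro i
        induction i using Fin.lastCases with
        | last => simpa [hlift] using hatj1
        | cast k => simpa [hlift, Fin.init] using hp1 k
      · intro i
        induction i using Fin.lastCases with
        | last => simpa [hlift] using hatj
        | cast k => simpa [hlift, Fin.init] using hp2 k
      · have e1 : (∏ i, (lift j p).1 i) = (∏ i, p.1 i) * t (j+1) := by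
          simp [hlift]
        have e2 : (∏ i, (lift j p).2 i) = (∏ i, p.2 i) * t j := by
          simp [hlift]
        rw [e1, e2]
        obtain ⟨hx0, hx1⟩ := ((hG (δ' j) hm).1 p hpG).1
        have hP1nn : 0 ≤ ∏ i, p.1 i := Finset.prod_nonneg (fun i _ => hx0 i)
        have hP1le : (∏ i, p.1 i) ≤ 1 := Finset.prod_le_one (fun i _ => hx0 i) (fun i _ => hx1 i)
        have htpos : 0 < t j := lt_of_lt_of_le hδ0 (htj j hjν)
        have hkey : t j * δ' j = (d:ℝ)*δ/D := by
          simp only [hδ']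
          field_simp
        have hΔ : t j * ((∏ i, p.2 i) - ∏ i, p.1 i) ≤ (d:ℝ)*δ/D := by
          calc t j * ((∏ i, p.2 i) - ∏ i, p.1 i) ≤ t j * δ' j :=
                mul_le_mul_of_nonneg_left hpΔ (le_of_lt htpos)
            _ = (d:ℝ)*δ/D := hkey
        have hstep : t j - t (j+1) = δ/D := by
          simp only [ht]
          push_cast
          field_simp
          ring
        have hP1mul : (t j - t (j+1)) * (∏ i, p.1 i) ≤ δ/D := by
          rw [hstep]
          exact mul_le_of_le_one_right (by positivity) hP1le
        have hfinal : (d:ℝ)*δ/D + δ/D = δ := by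
          rw [hD]
          field_simp
        have hid : (∏ i, p.2 i) * t j - (∏ i, p.1 i) * t (j+1)
            = t j * ((∏ i, p.2 i) - ∏ i, p.1 i) + (t j - t (j+1)) * (∏ i, p.1 i) := by ring
        calc (∏ i, p.2 i) * t j - (∏ i, p.1 i) * t (j+1)
            = t j * ((∏ i, p.2 i) - ∏ i, p.1 i) + (t j - t (j+1)) * (∏ i, p.1 i) := hid
          _ ≤ (d:ℝ)*δ/D + δ/D := add_le_add hΔ hP1mul
          _ = δ := hfinal
    · have hν_le_j : ν ≤ j := Nat.le_of_not_lt hjν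
      have hatν : a ≤ t ν := le_trans hatj (htmono ν j hν_le_j)
      refine ⟨tail, mem_insert_self _ _, ?_, ?_, ?_⟩
      · rw [htail1]
        exact hy0
      · intro i
        induction i using Fin.lastCases with
        | last => simpa [htail] using hatν
        | cast k => simpa [htail] using hy1 k.castSucc
      · have hz1 : (∏ i, tail.1 i) = 0 := by
          simp [htail]
        have hz2 : (∏ i, tail.2 i) = t ν := by
          simp [htail]
        rw [hz1, hz2]
        linarith
  · -- cardinality
    have hdpos : (0:ℝ) < (d:ℝ) := lt_of_lt_of_le one_pos hd0
    have hcard1 : (insert tail ((range ν).biUnion fun j => (Gj j).image (lift j))).card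
        ≤ 1 + ∑ j ∈ range ν, (Gj j).card := by
      refine le_trans (card_insert_le _ _) ?_
      have h1 := card_biUnion_le (s := range ν) (t := fun j => (Gj j).image (lift j))
      have h2 : ∑ j ∈ range ν, ((Gj j).image (lift j)).card ≤ ∑ j ∈ range ν, (Gj j).card :=
        Finset.sum_le_sum (fun j _ => card_image_le)
      omega
    set c : ℝ := D * (δ⁻¹ + 1) with hc
    have hcD : c = D/δ + D := by
      rw [hc, mul_add, mul_one, div_eq_mul_inv]
    have hcν : (ν:ℝ) ≤ c - (2*(d:ℝ)+1) := by
      have h1 : (ν:ℝ) ≤ D*(1-δ)/δ + 1 := by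
        rw [hν]; push_cast; linarith [Nat.floor_le hnn']
      have h2 : D*(1-δ)/δ = D/δ - D := by field_simp
      rw [h2] at h1
      rw [hcD, hD]
      rw [hD] at h1
      linarith
    have hGcard : ∀ j ∈ range ν, ((Gj j).card : ℝ)
        ≤ 2^(d-1) * ((d:ℝ)^d / (d.factorial:ℝ)) * ((c - 1 - (j:ℝ))^d / (d:ℝ)^d) := by
      intro j hjr
      rw [mem_range] at hjr
      have hm := hδ'mem j hjr
      have htpos : 0 < t j := lt_of_lt_of_le hδ0 (htj j hjr)
      have hinv : (δ' j)⁻¹ + 1 = (c - 1 - (j:ℝ))/(d:ℝ) := by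
        have htpos' : (0:ℝ) < 1 - (j:ℝ)*δ/((d:ℝ)+1) := by
          simp only [ht] at htpos
          rw [hD] at htpos
          exact htpos
        have hD1 : (0:ℝ) < (d:ℝ)+1 := by linarith
        simp only [hδ', ht, hc]
        rw [hD]
        rw [inv_div]
        field_simp
        ring
      rw [hGjm j hm]
      refine le_trans ((hG (δ' j) hm).2.2) ?_
      rw [hinv, div_pow]
    have hupos : ∀ j ∈ range ν, (0:ℝ) ≤ c - 1 - (j:ℝ) := by
      intro j hjr
      rw [mem_range] at hjr
      have hj1 : (j:ℝ) + 1 ≤ (ν:ℝ) := by exact_mod_cast hjr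
      linarith
    have hcν0 : (0:ℝ) ≤ c - (ν:ℝ) := by linarith
    have hsum : ∑ j ∈ range ν, (c - 1 - (j:ℝ))^d ≤ c^(d+1)/D := by
      have hterm : ∀ j ∈ range ν, (c - 1 - (j:ℝ))^d
          ≤ ((c - (j:ℝ))^(d+1) - (c - ((j:ℝ)+1))^(d+1))/D := by
        intro j hjr
        have hu := hupos j hjr
        have hgap := pow_succ_gap d hu
        have e1 : c - 1 - (j:ℝ) + 1 = c - (j:ℝ) := by ring
        have e2 : c - ((j:ℝ)+1) = c - 1 - (j:ℝ) := by ring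
        rw [e1] at hgap
        rw [e2, le_div_iff₀ hD0, hD]
        nlinarith [hgap]
      refine le_trans (Finset.sum_le_sum hterm) ?_
      rw [← Finset.sum_div]
      have htel := Finset.sum_range_sub' (fun j : ℕ => (c - (j:ℝ))^(d+1)) ν
      simp only [Nat.cast_succ, Nat.cast_zero, sub_zero] at htel
      rw [htel]
      have hνcast : (ν:ℝ) = ((⌊D * (1 - δ) / δ⌋₊ : ℕ):ℝ) + 1 := by rw [hν]; push_cast; ring
      have h9 : (0:ℝ) ≤ (c - (ν:ℝ))^(d+1) := pow_nonneg hcν0 _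
      exact (div_le_div_iff_of_pos_right hD0).mpr (by linarith)
    have hK0 : (0:ℝ) ≤ 2^(d-1) * ((d:ℝ)^d / (d.factorial:ℝ)) := by positivity
    have h5 : ∑ j ∈ range ν, ((Gj j).card : ℝ)
        ≤ 2^(d-1) * ((d:ℝ)^d / (d.factorial:ℝ)) * ((c^(d+1)/D) / (d:ℝ)^d) := by
      refine le_trans (Finset.sum_le_sum hGcard) ?_
      rw [← Finset.mul_sum]
      refine mul_le_mul_of_nonneg_left ?_ hK0
      rw [← Finset.sum_div]
      exact (div_le_div_iff_of_pos_right (by positivity)).mpr hsum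
    have heq : 2^(d-1) * ((d:ℝ)^d / (d.factorial:ℝ)) * ((c^(d+1)/D) / (d:ℝ)^d)
        = 2^(d-1) * (D^(d+1) / (((d+1).factorial:ℝ))) * (δ⁻¹+1)^(d+1) := by
      rw [hc, mul_pow]
      have hfe : (((d+1).factorial:ℝ)) = ((d:ℝ)+1) * (d.factorial:ℝ) := by
        rw [Nat.factorial_succ]; push_cast; ring
      rw [hfe, hD]
      have hfne : (d.factorial:ℝ) ≠ 0 := by positivity
      have hdne : (d:ℝ) ≠ 0 := ne_of_gt hdpos
      field_simp
    have hT1 : 1 ≤ 2^(d-1) * (D^(d+1) / (((d+1).factorial:ℝ))) * (δ⁻¹+1)^(d+1) := by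
      have ha : (1:ℝ) ≤ 2^(d-1) := one_le_pow₀ (by norm_num)
      have hfle : (((d+1).factorial:ℝ)) ≤ D^(d+1) := by
        have h0 := Nat.factorial_le_pow (d+1)
        have hcast : (((d+1).factorial:ℝ)) ≤ (((d+1)^(d+1) : ℕ) : ℝ) := Nat.cast_le.mpr h0
        push_cast at hcast
        rw [← hD] at hcast
        exact hcast
      have hfp : (0:ℝ) < ((d+1).factorial:ℝ) := by positivity
      have hb : (1:ℝ) ≤ D^(d+1) / (((d+1).factorial:ℝ)) := by
        rw [le_div_iff₀ hfp]
        linarith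
      have hi0 : (0:ℝ) < δ⁻¹ := inv_pos.mpr hδ0
      have hcge : (1:ℝ) ≤ (δ⁻¹+1)^(d+1) := one_le_pow₀ (by linarith)
      have hab : (1:ℝ) ≤ 2^(d-1) * (D^(d+1) / (((d+1).factorial:ℝ))) := by nlinarith
      nlinarith [hab, hcge]
    have hpow2 : (2:ℝ)^((d+1)-1) = 2 * 2^(d-1) := by
      rw [← pow_succ']
      congr 1
      omega
    refine le_trans (Nat.cast_le.mpr hcard1) ?_
    have hcast1 : ((1 + ∑ j ∈ range ν, (Gj j).card : ℕ) : ℝ)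
        = 1 + ∑ j ∈ range ν, ((Gj j).card : ℝ) := by push_cast; ring
    rw [hcast1]
    have h6 : ∑ j ∈ range ν, ((Gj j).card : ℝ)
        ≤ 2^(d-1) * (D^(d+1) / (((d+1).factorial:ℝ))) * (δ⁻¹+1)^(d+1) := by
      rw [← heq]; exact h5
    rw [hpow2]
    rw [hD] at h6 hT1
    have e : 2 * 2^(d-1) * (((d:ℝ)+1)^(d+1) / (((d+1).factorial:ℝ))) * (δ⁻¹+1)^(d+1)
        = 2 * (2^(d-1) * (((d:ℝ)+1)^(d+1) / (((d+1).factorial:ℝ))) * (δ⁻¹+1)^(d+1)) := by ring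
    rw [e]
    linarith

lemma base_case (δ : ℝ) (hδ : δ ∈ Set.Ioc (0:ℝ) 1) :
    ∃ F : Finset ((Fin 1 → ℝ) × (Fin 1 → ℝ)),
      (∀ p ∈ F, p.1 ∈ Set.Icc (0:Fin 1 → ℝ) 1 ∧ p.2 ∈ Set.Icc (0:Fin 1 → ℝ) 1) ∧
      (∀ y : Fin 1 → ℝ, y ∈ Set.Icc (0:Fin 1 → ℝ) 1 →
        ∃ p ∈ F, p.1 ≤ y ∧ y ≤ p.2 ∧ (∏ i, p.2 i) - ∏ i, p.1 i ≤ δ) ∧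
      (F.card : ℝ) ≤ 2^(1-1) * ((1:ℝ)^1 / (Nat.factorial 1 : ℝ)) * (δ⁻¹+1)^1 := by
  obtain ⟨hδ0, hδ1⟩ := hδ
  refine ⟨(range (⌊δ⁻¹⌋₊ + 1)).image (fun (j : ℕ) => ((fun _ : Fin 1 => max (1 - ((j:ℝ)+1)*δ) 0),
      (fun _ : Fin 1 => 1 - (j:ℝ)*δ))), ?_, ?_, ?_⟩
  · intro p hp
    simp only [mem_image, mem_range] at hp
    obtain ⟨j, hj, rfl⟩ := hp
    have hj0 : (0:ℝ) ≤ (j:ℝ) := j.cast_nonneg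
    have hjr : (j:ℝ) * δ ≤ 1 := by
      have h1 : (j:ℝ) ≤ (⌊δ⁻¹⌋₊:ℝ) := Nat.cast_le.mpr (Nat.lt_succ_iff.mp hj)
      have h2 : (⌊δ⁻¹⌋₊:ℝ) ≤ δ⁻¹ := Nat.floor_le (by positivity)
      calc (j:ℝ) * δ ≤ δ⁻¹ * δ := by nlinarith
        _ = 1 := by field_simp
    constructor
    · constructor
      · intro i; simp only [Pi.zero_apply]; exact le_max_right _ _
      · intro i; simp only [Pi.one_apply]; exact max_le (by nlinarith) zero_le_one
    · constructor
      · intro i; simp only [Pi.zero_apply]; linarith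
      · intro i; simp only [Pi.one_apply]; nlinarith
  · intro y hy
    obtain ⟨hy0, hy1⟩ := hy
    have hy00 : (0:ℝ) ≤ y 0 := hy0 0
    have hy01 : y 0 ≤ 1 := hy1 0
    have hnn : (0:ℝ) ≤ (1 - y 0)/δ := div_nonneg (by linarith) (le_of_lt hδ0)
    set j : ℕ := ⌊(1 - y 0)/δ⌋₊ with hjdef
    have hjle : (j:ℝ) ≤ (1 - y 0)/δ := Nat.floor_le hnn
    have hjlt : (1 - y 0)/δ < j + 1 := Nat.lt_floor_add_one _
    have hxle : 1 - ((j:ℝ)+1)*δ < y 0 := by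
      rw [div_lt_iff₀ hδ0] at hjlt; nlinarith
    have hzge : y 0 ≤ 1 - (j:ℝ)*δ := by
      have := (le_div_iff₀ hδ0).mp hjle; linarith
    have hjν : j < ⌊δ⁻¹⌋₊ + 1 := by
      have h3 : (1 - y 0)/δ ≤ δ⁻¹ := by
        rw [div_le_iff₀ hδ0, inv_mul_cancel₀ (ne_of_gt hδ0)]; linarith
      exact Nat.lt_succ_iff.mpr (Nat.floor_le_floor h3)
    refine ⟨_, mem_image_of_mem _ (mem_range.mpr hjν), ?_, ?_, ?_⟩
    · intro i
      have hi : i = 0 := Subsingleton.elim i 0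
      subst hi
      exact max_le (le_of_lt hxle) hy00
    · intro i
      have hi : i = 0 := Subsingleton.elim i 0
      subst hi
      exact hzge
    · simp only [Fin.prod_univ_one]
      rcases le_total 0 (1 - ((j:ℝ)+1)*δ) with h | h
      · rw [max_eq_left h]; linarith
      · rw [max_eq_right h]; linarith
  · have h1 : ((Finset.image (fun (j : ℕ) => ((fun _ : Fin 1 => max (1 - ((j:ℝ)+1)*δ) 0),
        (fun _ : Fin 1 => 1 - (j:ℝ)*δ))) (range (⌊δ⁻¹⌋₊ + 1))).card) ≤ ⌊δ⁻¹⌋₊ + 1 := by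
      refine le_trans card_image_le ?_
      rw [card_range]
    refine le_trans (Nat.cast_le.mpr h1) ?_
    have h2 : (⌊δ⁻¹⌋₊:ℝ) ≤ δ⁻¹ := Nat.floor_le (by positivity)
    push_cast
    norm_num
    linarith

lemma bracket_cover (d : ℕ) (hd : 1 ≤ d) :
    ∀ δ : ℝ, δ ∈ Set.Ioc (0:ℝ) 1 →
    ∃ F : Finset ((Fin d → ℝ) × (Fin d → ℝ)),
      (∀ p ∈ F, p.1 ∈ Set.Icc (0:Fin d → ℝ) 1 ∧ p.2 ∈ Set.Icc (0:Fin d → ℝ) 1) ∧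
      (∀ y : Fin d → ℝ, y ∈ Set.Icc (0:Fin d → ℝ) 1 →
        ∃ p ∈ F, p.1 ≤ y ∧ y ≤ p.2 ∧ (∏ i, p.2 i) - ∏ i, p.1 i ≤ δ) ∧
      (F.card : ℝ) ≤ 2^(d-1) * ((d:ℝ)^d / (d.factorial:ℝ)) * (δ⁻¹+1)^d := by
  induction d, hd using Nat.le_induction with
  | base =>
    intro δ hδ
    simpa using base_case δ hδ
  | succ d hd ih =>
    intro δ hδ
    obtain ⟨F, h1, h2, h3⟩ := step_case d hd ih δ hδ
    exact ⟨F, h1, h2, by exact_mod_cast h3⟩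

end Aux

/-- A δ-cover of [0,1)^d. -/
def IsDeltaCover (d : ℕ) (δ : ℝ) (Γ : Finset (Fin d → ℝ)) : Prop :=
  (↑Γ : Set (Fin d → ℝ)) ⊆ Set.Icc 0 1 ∧
    ∀ y ∈ Set.Ico (0 : Fin d → ℝ) 1, ∃ x ∈ insert (0 : Fin d → ℝ) Γ,
      ∃ z ∈ insert (0 : Fin d → ℝ) Γ,
        x ≤ y ∧ y ≤ z ∧ (∏ i, z i) - ∏ i, x i ≤ δ

/-- Existence of a δ-cover of [0,1)^d of cardinality at most 2^d (d^d/d!) (δ⁻¹+1)^d;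
in particular N(d,δ) ≤ (2e)^d (1+δ⁻¹)^d. -/
theorem stmt_10 (d : ℕ) (hd : 1 ≤ d) (δ : ℝ) (hδ : δ ∈ Set.Ioc (0 : ℝ) 1) :
    ∃ Γ : Finset (Fin d → ℝ), IsDeltaCover d δ Γ ∧
      (Γ.card : ℝ) ≤ 2 ^ d * ((d : ℝ) ^ d / (d.factorial : ℝ)) * (δ⁻¹ + 1) ^ d ∧
      (Γ.card : ℝ) ≤ (2 * Real.exp 1) ^ d * (1 + δ⁻¹) ^ d := by
  classical
  obtain ⟨F, hF1, hF2, hF3⟩ := bracket_cover d hd δ hδ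
  obtain ⟨hδ0, hδ1⟩ := hδ
  set Γ : Finset (Fin d → ℝ) := F.image Prod.fst ∪ F.image Prod.snd with hΓ
  have hbound1 : (Γ.card : ℝ) ≤ 2 ^ d * ((d : ℝ) ^ d / (d.factorial : ℝ)) * (δ⁻¹ + 1) ^ d := by
    have hc : Γ.card ≤ 2 * F.card := by
      rw [hΓ]
      refine le_trans (Finset.card_union_le _ _) ?_
      have h1 := Finset.card_image_le (s := F) (f := Prod.fst)
      have h2 := Finset.card_image_le (s := F) (f := Prod.snd)
      omega
    refine le_trans (Nat.cast_le.mpr hc) ?_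
    push_cast
    have hpow : (2:ℝ)^d = 2 * 2^(d-1) := by
      rw [← pow_succ']
      congr 1
      omega
    rw [hpow]
    have e : 2 * 2^(d-1) * ((d:ℝ)^d/(d.factorial:ℝ)) * (δ⁻¹+1)^d
        = 2 * (2^(d-1) * ((d:ℝ)^d/(d.factorial:ℝ)) * (δ⁻¹+1)^d) := by ring
    rw [e]
    linarith
  refine ⟨Γ, ⟨?_, ?_⟩, hbound1, ?_⟩
  · intro γ hγ
    simp only [hΓ, Finset.coe_union, Finset.coe_image, Set.mem_union, Set.mem_image,
      Finset.mem_coe] at hγ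
    rcases hγ with ⟨p, hp, rfl⟩ | ⟨p, hp, rfl⟩
    · exact (hF1 p hp).1
    · exact (hF1 p hp).2
  · intro y hy
    have hy' : y ∈ Set.Icc (0:Fin d → ℝ) 1 := ⟨hy.1, le_of_lt hy.2⟩
    obtain ⟨p, hp, h1, h2, h3⟩ := hF2 y hy'
    refine ⟨p.1, Finset.mem_insert_of_mem ?_, p.2, Finset.mem_insert_of_mem ?_, h1, h2, h3⟩
    · rw [hΓ]
      exact Finset.mem_union_left _ (Finset.mem_image_of_mem _ hp)
    · rw [hΓ]
      exact Finset.mem_union_right _ (Finset.mem_image_of_mem _ hp)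
  · have hdf : ((d:ℝ)^d / (d.factorial:ℝ)) ≤ Real.exp 1 ^ d := by
      have h1 : ((d:ℝ)^d / (d.factorial:ℝ)) ≤ Real.exp (d:ℝ) :=
        Real.pow_div_factorial_le_exp (d:ℝ) (Nat.cast_nonneg d) d
      have h2 : Real.exp ((d:ℝ)) = Real.exp 1 ^ d := by
        rw [← Real.exp_nat_mul]
        norm_num
      rw [h2] at h1
      exact h1
    have hnn : (0:ℝ) ≤ (δ⁻¹+1)^d := by positivity
    have h4 : 2 ^ d * ((d : ℝ) ^ d / (d.factorial : ℝ)) * (δ⁻¹ + 1) ^ d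
        ≤ 2 ^ d * Real.exp 1 ^ d * (δ⁻¹ + 1) ^ d := by
      have h5 : (0:ℝ) ≤ (2:ℝ)^d := by positivity
      have := mul_le_mul_of_nonneg_left hdf h5
      exact mul_le_mul_of_nonneg_right this hnn
    have h6 : 2 ^ d * Real.exp 1 ^ d * (δ⁻¹ + 1) ^ d
        = (2 * Real.exp 1) ^ d * (1 + δ⁻¹) ^ d := by
      rw [mul_pow, add_comm δ⁻¹ 1]
    linarith
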